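/- arXiv:1712.01155 — 3 statements merged into one kernel-verified Lean document; each statement's English description precedes it below -/
import Mathlib

section
/- For every l ≥ 1 one has h_{l−2}^1 = r_l. Moreover, r_l depends only on the first l+1 entries s_0, …, s_l of the sequence: if two sequences satisfying the hypotheses agree in entries 0, …, l, then the corresponding values r_l coincide. -/
/-- The numbers `f_l^k` with the first index shifted by two: `fRec s l k = f_{l-2}^k`. -/
noncomputable def fRec (s : ℕ → ℂ) : ℕ → ℕ → ℂ
  | 0 => fun k => if k = 0 then 1 else 0
  | 1 => fun k => if k = 0 then 1 else 0
  | 2 => fun k => s k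
  | l + 3 => fun k =>
      ((-1) ^ l / fRec s l 0) *
        (fRec s (l + 2) 0 * fRec s (l + 1) (k + 1) - fRec s (l + 1) 0 * fRec s (l + 2) (k + 1))

/-- `rCoef s 0 = r_0 = 0` and for `l ≥ 1`,
`rCoef s l = r_l = (−1)^{l−1} f_l^0 f_{l−3}^0 / (f_{l−2}^0 f_{l−1}^0)`. -/
noncomputable def rCoef (s : ℕ → ℂ) : ℕ → ℂ
  | 0 => 0
  | l + 1 => (-1) ^ l * (fRec s (l + 3) 0 * fRec s l 0) / (fRec s (l + 1) 0 * fRec s (l + 2) 0)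

/-- The numbers `h_l^k` with the first index shifted by one: `hNum s l k = h_{l-1}^k`, so
`hNum s 0 k = h_{-1}^k = −s_k/s_0`, `hNum s 1 k = h_0^k = s_k/s_0 − s_{k+1}/s_1`, and for
`l ≥ 1`, `h_l^k = h_{l−2}^{k+1}/h_{l−2}^1 − h_{l−1}^{k+1}/h_{l−1}^1`. -/
noncomputable def hNum (s : ℕ → ℂ) : ℕ → ℕ → ℂ
  | 0 => fun k => -(s k / s 0)
  | 1 => fun k => s k / s 0 - s (k + 1) / s 1
  | l + 2 => fun k =>
      hNum s l (k + 1) / hNum s l 1 - hNum s (l + 1) (k + 1) / hNum s (l + 1) 1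

/-- normalized f -/
noncomputable def Fn (s : ℕ → ℂ) (l k : ℕ) : ℂ := fRec s l k / fRec s l 0

section main
variable (s : ℕ → ℂ)

lemma Dne (hf : ∀ l, fRec s l 0 ≠ 0) (l : ℕ) :
    fRec s (l+2) 0 * fRec s (l+1) 1 - fRec s (l+1) 0 * fRec s (l+2) 1 ≠ 0 := by
  have h3 := hf (l+3)
  have hE : fRec s (l+3) 0 = ((-1) ^ l / fRec s l 0) *
      (fRec s (l+2) 0 * fRec s (l+1) 1 - fRec s (l+1) 0 * fRec s (l+2) 1) := by
    simp [fRec]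
  rw [hE] at h3
  intro h
  rw [h, mul_zero] at h3
  exact h3 rfl

lemma key (hf : ∀ l, fRec s l 0 ≠ 0) (l k : ℕ) :
    Fn s (l+3) k = (Fn s (l+2) (k+1) - Fn s (l+1) (k+1)) / (Fn s (l+2) 1 - Fn s (l+1) 1) := by
  have hA := hf (l+1)
  have hB := hf (l+2)
  have hC := hf l
  have hD := Dne s hf l
  have hco : ((-1:ℂ) ^ l / fRec s l 0) ≠ 0 := by
    apply div_ne_zero _ hC
    simp [pow_ne_zero]
  have h1 : fRec s (l+3) k = ((-1) ^ l / fRec s l 0) *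
      (fRec s (l+2) 0 * fRec s (l+1) (k+1) - fRec s (l+1) 0 * fRec s (l+2) (k+1)) := by
    simp [fRec]
  have h0 : fRec s (l+3) 0 = ((-1) ^ l / fRec s l 0) *
      (fRec s (l+2) 0 * fRec s (l+1) 1 - fRec s (l+1) 0 * fRec s (l+2) 1) := by
    simp [fRec]
  unfold Fn
  rw [h1, h0, mul_div_mul_left _ _ hco]
  have hD' : fRec s (l+2) 1 / fRec s (l+2) 0 - fRec s (l+1) 1 / fRec s (l+1) 0 ≠ 0 := by
    rw [div_sub_div _ _ hB hA]
    apply div_ne_zero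
    · intro h; apply hD; linear_combination -h
    · exact mul_ne_zero hB hA
  rw [div_eq_div_iff hD hD']
  field_simp
  ring

lemma hnz (hf : ∀ l, fRec s l 0 ≠ 0) (l : ℕ) : Fn s (l+1) 1 - Fn s (l+2) 1 ≠ 0 := by
  have hA := hf (l+1)
  have hB := hf (l+2)
  have hD := Dne s hf l
  unfold Fn
  rw [div_sub_div _ _ hA hB]
  apply div_ne_zero
  · intro h; apply hD; linear_combination h
  · exact mul_ne_zero hA hB

lemma hF (hf : ∀ l, fRec s l 0 ≠ 0) : ∀ l k : ℕ, 1 ≤ k → hNum s l k = Fn s (l+1) k - Fn s (l+2) k := by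
  intro l
  induction l using Nat.strong_induction_on with
  | _ l ih =>
    match l with
    | 0 =>
      intro k hk
      have hk0 : k ≠ 0 := by omega
      simp [hNum, Fn, fRec, hk0]
    | 1 =>
      intro k hk
      have h3k : fRec s 3 k = -s (k+1) := by
        have hk0 : k + 1 ≠ 0 := by omega
        simp [fRec, hk0]
      have h30 : fRec s 3 0 = -s 1 := by simp [fRec]
      have h2k : fRec s 2 k = s k := rfl
      have h20 : fRec s 2 0 = s 0 := rfl
      simp only [hNum, Fn, h2k, h20, h3k, h30, neg_div_neg_eq]
    | (l+2) =>
      intro k hk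
      have ih0 := ih l (by omega)
      have ih1 := ih (l+1) (by omega)
      have e1 : hNum s (l+2) k = hNum s l (k+1) / hNum s l 1 - hNum s (l+1) (k+1) / hNum s (l+1) 1 := by
        simp [hNum]
      rw [e1, ih0 (k+1) (by omega), ih0 1 (by omega), ih1 (k+1) (by omega), ih1 1 (by omega)]
      have k1 : (Fn s (l+1) (k+1) - Fn s (l+2) (k+1)) / (Fn s (l+1) 1 - Fn s (l+2) 1)
          = Fn s (l+3) k := by
        rw [key s hf l k]
        rw [← neg_sub (Fn s (l+1) (k+1)), ← neg_sub (Fn s (l+1) 1), neg_div_neg_eq]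
      have k2 : (Fn s (l+2) (k+1) - Fn s (l+3) (k+1)) / (Fn s (l+2) 1 - Fn s (l+3) 1)
          = Fn s (l+4) k := by
        rw [key s hf (l+1) k]
        rw [← neg_sub (Fn s (l+2) (k+1)), ← neg_sub (Fn s (l+2) 1), neg_div_neg_eq]
      rw [k1, k2]

lemma main1 (hf : ∀ l, fRec s l 0 ≠ 0) (m : ℕ) : hNum s m 1 = rCoef s (m + 1) := by
  rw [hF s hf m 1 le_rfl]
  have hA := hf (m+1)
  have hB := hf (m+2)
  have hC := hf m
  have h0 : fRec s (m+3) 0 = ((-1) ^ m / fRec s m 0) *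
      (fRec s (m+2) 0 * fRec s (m+1) 1 - fRec s (m+1) 0 * fRec s (m+2) 1) := by
    simp [fRec]
  show Fn s (m+1) 1 - Fn s (m+2) 1 = rCoef s (m+1)
  unfold Fn
  rw [show rCoef s (m+1) = (-1) ^ m * (fRec s (m + 3) 0 * fRec s m 0) /
      (fRec s (m + 1) 0 * fRec s (m + 2) 0) from rfl, h0]
  have hm : ((-1:ℂ)) ^ m * (-1:ℂ) ^ m = 1 := by
    rw [← pow_add]; exact Even.neg_one_pow ⟨m, rfl⟩
  field_simp
  ring_nf
  simp only [mul_comm m 2, pow_mul]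
  norm_num
end main

lemma fRec_congr (s s' : ℕ → ℂ) : ∀ l k, (∀ j ≤ l + k - 2, s j = s' j) → fRec s l k = fRec s' l k := by
  intro l
  induction l using Nat.strong_induction_on with
  | _ l ih =>
    match l with
    | 0 => intro k h; simp [fRec]
    | 1 => intro k h; simp [fRec]
    | 2 => intro k h; simpa [fRec] using h k (by omega)
    | (l+3) =>
      intro k h
      have h1 := ih l (by omega) 0 (fun j hj => h j (by omega))
      have h2 := ih (l+2) (by omega) 0 (fun j hj => h j (by omega))
      have h3 := ih (l+1) (by omega) (k+1) (fun j hj => h j (by omega))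
      have h4 := ih (l+2) (by omega) (k+1) (fun j hj => h j (by omega))
      have h5 := ih (l+1) (by omega) 0 (fun j hj => h j (by omega))
      simp only [fRec]
      rw [h1, h2, h3, h4, h5]

/-- For every `l ≥ 1` one has `h_{l−2}^1 = r_l` (with the shifted indexing
this reads `hNum s (l-1) 1 = rCoef s l`, stated below for `l = m + 1`).  Moreover, `r_l`
depends only on the entries `s_0, …, s_l`: if two sequences satisfying the hypotheses agree
in entries `0, …, l`, the corresponding values `r_l` coincide. -/
theorem h_eq_r_and_dependence
    (s : ℕ → ℂ) (hf : ∀ l, fRec s l 0 ≠ 0) :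
    (∀ m : ℕ, hNum s m 1 = rCoef s (m + 1)) ∧
    (∀ s' : ℕ → ℂ, (∀ l, fRec s' l 0 ≠ 0) →
      ∀ l : ℕ, (∀ k ≤ l, s k = s' k) → rCoef s l = rCoef s' l) := by
  constructor
  · exact main1 s hf
  · intro s' _ l h
    match l with
    | 0 => simp [rCoef]
    | l+1 =>
      simp only [rCoef]
      rw [fRec_congr s s' (l+3) 0 (fun j hj => h j (by omega)),
          fRec_congr s s' l 0 (fun j hj => h j (by omega)),
          fRec_congr s s' (l+1) 0 (fun j hj => h j (by omega)),
          fRec_congr s s' (l+2) 0 (fun j hj => h j (by omega))]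
end

section
/- For every n ≥ 1 there exists a nonzero polynomial p in the 2n complex variables s_0, …, s_{2n−1} such that for every s = (s_0, …, s_{2n−1}) ∈ ℂ^{2n} with p(s) ≠ 0, the polynomial Q_n^{(s)}(w) has degree exactly n and has n pairwise distinct (simple) roots. In particular, the set of s ∈ ℂ^{2n} for which Q_n^{(s)} fails to have n simple roots is contained in a proper algebraic subset of ℂ^{2n}. -/
open Polynomial

/-- Jacobi's determinant formula for the denominator `Q_n` of the `[n−1/n]` Padé
approximant of `Σ_k s_k w^{−k}`: the determinant of the `(n+1)×(n+1)` matrix whose entry in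
row `i` (`0 ≤ i ≤ n−1`), column `j` (`0 ≤ j ≤ n`) is `s_{n+i−j}`, and whose last row is
`(1, w, w², …, w^n)`. -/
noncomputable def QJac (n : ℕ) (s : Fin (2 * n) → ℂ) : Polynomial ℂ :=
  Matrix.det (Matrix.of fun i j : Fin (n + 1) =>
    if h : (i : ℕ) < n then C (s ⟨n + (i : ℕ) - (j : ℕ), by omega⟩) else X ^ (j : ℕ))

open Matrix

/-- Generic version of `QJac` over any commutative ring. -/
noncomputable def Qgen (n : ℕ) {A : Type*} [CommRing A] (s : Fin (2 * n) → A) : Polynomial A :=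
  Matrix.det (Matrix.of fun i j : Fin (n + 1) =>
    if h : (i : ℕ) < n then C (s ⟨n + (i : ℕ) - (j : ℕ), by omega⟩) else X ^ (j : ℕ))

lemma Qgen_map {A B : Type*} [CommRing A] [CommRing B] (φ : A →+* B) (n : ℕ)
    (s : Fin (2 * n) → A) : (Qgen n s).map φ = Qgen n (fun k => φ (s k)) := by
  unfold Qgen
  rw [← Polynomial.coe_mapRingHom, RingHom.map_det]
  congr 1
  ext i j
  simp only [RingHom.mapMatrix_apply, Matrix.map_apply, Matrix.of_apply, coe_mapRingHom]
  split_ifs with h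
  · simp
  · simp

lemma det_natDegree_le {m : ℕ} {A : Type*} [CommRing A]
    (M : Matrix (Fin (m + 1)) (Fin (m + 1)) (Polynomial A))
    (h0 : ∀ (i j : Fin (m + 1)), (i : ℕ) < m → (M i j).natDegree = 0)
    (h1 : ∀ (i j : Fin (m + 1)), (M i j).natDegree ≤ m) :
    M.det.natDegree ≤ m := by
  rw [Matrix.det_apply]
  refine natDegree_sum_le_of_forall_le _ _ fun σ _ => ?_
  have hprod : (∏ i, M (σ i) i).natDegree ≤ m := by
    refine (Polynomial.natDegree_prod_le _ _).trans ?_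
    have hterm : ∀ i : Fin (m + 1),
        (M (σ i) i).natDegree ≤ if σ i = Fin.last m then m else 0 := by
      intro i
      split_ifs with h
      · exact h1 _ _
      · have hlt : ((σ i : Fin (m+1)) : ℕ) < m := by
          have h2 := (σ i).isLt
          have h3 : ((σ i : Fin (m+1)) : ℕ) ≠ m := fun hc => h (Fin.ext hc)
          omega
        rw [h0 _ _ hlt]
    refine (Finset.sum_le_sum fun i _ => hterm i).trans ?_
    have hiff : ∀ i : Fin (m + 1), (σ i = Fin.last m) ↔ (i = σ⁻¹ (Fin.last m)) := by
      intro i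
      constructor
      · intro h; simp [← h]
      · intro h; simp [h]
    calc (∑ i : Fin (m+1), if σ i = Fin.last m then m else 0)
        = ∑ i : Fin (m+1), if i = σ⁻¹ (Fin.last m) then m else 0 :=
          Finset.sum_congr rfl fun i _ => if_congr (hiff i) rfl rfl
      _ ≤ m := by rw [Finset.sum_ite_eq' Finset.univ]; simp
  rcases Int.units_eq_one_or (Equiv.Perm.sign σ) with h | h <;>
    simp only [h, Units.smul_def, Units.val_neg, Units.val_one, neg_smul, one_smul,
      natDegree_neg] <;> exact hprod

lemma Qgen_natDegree_le {A : Type*} [CommRing A] (n : ℕ) (s : Fin (2 * n) → A) :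
    (Qgen n s).natDegree ≤ n := by
  refine det_natDegree_le _ ?_ ?_
  · intro i j hi
    simp only [Matrix.of_apply, dif_pos hi, natDegree_C]
  · intro i j
    by_cases hi : (i : ℕ) < n
    · simp only [Matrix.of_apply, dif_pos hi, natDegree_C]; omega
    · simp only [Matrix.of_apply, dif_neg hi]
      exact (natDegree_X_pow_le _).trans (Nat.lt_succ_iff.mp j.isLt)

/-- Sylvester-type matrix of `f` and its derivative, with `f` of formal degree `n`. -/
noncomputable def sylv (n : ℕ) {A : Type*} [CommRing A] (f : Polynomial A) :
    Matrix (Fin (n - 1 + n)) (Fin (n - 1 + n)) A :=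
  Matrix.of fun i j =>
    if (j : ℕ) < n - 1 then (X ^ (j : ℕ) * f).coeff i
    else (X ^ ((j : ℕ) - (n - 1)) * derivative f).coeff i

lemma sylv_map {A B : Type*} [CommRing A] [CommRing B] (φ : A →+* B) (n : ℕ)
    (f : Polynomial A) : (sylv n f).map φ = sylv n (f.map φ) := by
  ext i j
  simp only [sylv, Matrix.map_apply, Matrix.of_apply]
  split_ifs with h <;>
    simp [← Polynomial.coeff_map, Polynomial.map_mul, Polynomial.map_pow, derivative_map]

noncomputable def aPoly (n : ℕ) {A : Type*} [CommRing A] (v : Fin (n - 1 + n) → A) :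
    Polynomial A :=
  ∑ j : Fin (n - 1), C (v (Fin.castAdd n j)) * X ^ (j : ℕ)

noncomputable def bPoly (n : ℕ) {A : Type*} [CommRing A] (v : Fin (n - 1 + n) → A) :
    Polynomial A :=
  ∑ j : Fin n, C (v (Fin.natAdd (n - 1) j)) * X ^ (j : ℕ)

lemma sylv_mulVec {A : Type*} [CommRing A] (n : ℕ) (f : Polynomial A)
    (v : Fin (n - 1 + n) → A) (i : Fin (n - 1 + n)) :
    (sylv n f *ᵥ v) i = (aPoly n v * f + bPoly n v * derivative f).coeff i := by
  have ha : (aPoly n v * f).coeff i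
      = ∑ j : Fin (n - 1), v (Fin.castAdd n j) * (X ^ (j : ℕ) * f).coeff i := by
    rw [aPoly, Finset.sum_mul, finset_sum_coeff]
    exact Finset.sum_congr rfl fun j _ => by rw [mul_assoc, coeff_C_mul]
  have hb : (bPoly n v * derivative f).coeff i
      = ∑ j : Fin n, v (Fin.natAdd (n - 1) j) * (X ^ (j : ℕ) * derivative f).coeff i := by
    rw [bPoly, Finset.sum_mul, finset_sum_coeff]
    exact Finset.sum_congr rfl fun j _ => by rw [mul_assoc, coeff_C_mul]
  rw [coeff_add, ha, hb]
  simp only [Matrix.mulVec, dotProduct, sylv, Matrix.of_apply]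
  rw [Fin.sum_univ_add]
  congr 1
  · refine Finset.sum_congr rfl fun j _ => ?_
    rw [if_pos (by simpa using j.isLt), mul_comm, Fin.coe_castAdd]
  · refine Finset.sum_congr rfl fun j _ => ?_
    have h2 : ((Fin.natAdd (n - 1) j : Fin (n - 1 + n)) : ℕ) - (n - 1) = (j : ℕ) := by
      simp only [Fin.coe_natAdd]; omega
    rw [if_neg (by simp only [Fin.coe_natAdd]; omega), h2, mul_comm]

lemma aPoly_coeff_eq_zero {A : Type*} [CommRing A] (n : ℕ) (v : Fin (n - 1 + n) → A)
    (k : ℕ) (hk : n - 1 ≤ k) : (aPoly n v).coeff k = 0 := by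
  simp only [aPoly, finset_sum_coeff, coeff_C_mul, coeff_X_pow]
  refine Finset.sum_eq_zero fun j _ => ?_
  have := j.isLt
  rw [if_neg (by omega), mul_zero]

lemma bPoly_coeff_eq_zero {A : Type*} [CommRing A] (n : ℕ) (v : Fin (n - 1 + n) → A)
    (k : ℕ) (hk : n ≤ k) : (bPoly n v).coeff k = 0 := by
  simp only [bPoly, finset_sum_coeff, coeff_C_mul, coeff_X_pow]
  refine Finset.sum_eq_zero fun j _ => ?_
  have := j.isLt
  rw [if_neg (by omega), mul_zero]

lemma aPoly_coeff {A : Type*} [CommRing A] (n : ℕ) (v : Fin (n - 1 + n) → A)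
    (j : Fin (n - 1)) : (aPoly n v).coeff j = v (Fin.castAdd n j) := by
  simp only [aPoly, finset_sum_coeff, coeff_C_mul, coeff_X_pow]
  rw [Finset.sum_eq_single j]
  · simp
  · intro j' _ hj'
    rw [if_neg (fun hc => hj' (Fin.ext hc.symm)), mul_zero]
  · simp

lemma bPoly_coeff {A : Type*} [CommRing A] (n : ℕ) (v : Fin (n - 1 + n) → A)
    (j : Fin n) : (bPoly n v).coeff j = v (Fin.natAdd (n - 1) j) := by
  simp only [bPoly, finset_sum_coeff, coeff_C_mul, coeff_X_pow]
  rw [Finset.sum_eq_single j]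
  · simp
  · intro j' _ hj'
    rw [if_neg (fun hc => hj' (Fin.ext hc.symm)), mul_zero]
  · simp

lemma combo_coeff_zero {A : Type*} [CommRing A] (n : ℕ) (hn : 1 ≤ n) (f : Polynomial A)
    (hf : f.natDegree ≤ n) (v : Fin (n - 1 + n) → A) (k : ℕ) (hk : n - 1 + n ≤ k) :
    (aPoly n v * f + bPoly n v * derivative f).coeff k = 0 := by
  have hf' : (derivative f).natDegree ≤ n - 1 :=
    (natDegree_derivative_le f).trans (by omega)
  rw [coeff_add, coeff_mul, coeff_mul]
  rw [Finset.sum_eq_zero, Finset.sum_eq_zero, add_zero]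
  · rintro ⟨x, y⟩ hxy
    rw [Finset.HasAntidiagonal.mem_antidiagonal] at hxy
    by_cases hx : n ≤ x
    · rw [bPoly_coeff_eq_zero n v x hx, zero_mul]
    · rw [coeff_eq_zero_of_natDegree_lt (lt_of_le_of_lt hf' (by omega)), mul_zero]
  · rintro ⟨x, y⟩ hxy
    rw [Finset.HasAntidiagonal.mem_antidiagonal] at hxy
    by_cases hx : n - 1 ≤ x
    · rw [aPoly_coeff_eq_zero n v x hx, zero_mul]
    · rw [coeff_eq_zero_of_natDegree_lt (lt_of_le_of_lt hf (by omega)), mul_zero]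

lemma coprime_of_sylv_det_ne_zero {F : Type*} [Field F] {n : ℕ} (hn : 1 ≤ n)
    {f : Polynomial F} (hdeg : f.natDegree ≤ n) (h : (sylv n f).det ≠ 0) :
    IsCoprime f (derivative f) := by
  have hu : IsUnit (sylv n f).det := isUnit_iff_ne_zero.mpr h
  set e : Fin (n - 1 + n) → F := Pi.single ⟨0, by omega⟩ 1 with he
  set v : Fin (n - 1 + n) → F := (sylv n f)⁻¹ *ᵥ e with hv
  have hmv : sylv n f *ᵥ v = e := by
    rw [hv, Matrix.mulVec_mulVec, Matrix.mul_nonsing_inv _ hu, Matrix.one_mulVec]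
  have hg : aPoly n v * f + bPoly n v * derivative f = 1 := by
    ext k
    by_cases hk : k < n - 1 + n
    · have h1 := sylv_mulVec n f v ⟨k, hk⟩
      rw [hmv] at h1
      rw [← h1, he]
      simp [Pi.single_apply, Polynomial.coeff_one, Fin.ext_iff, eq_comm]
    · rw [combo_coeff_zero n hn f hdeg v k (by omega), Polynomial.coeff_one,
        if_neg (by omega)]
  exact ⟨aPoly n v, bPoly n v, hg⟩

lemma sylv_det_ne_zero_of_coprime {F : Type*} [Field F] {n : ℕ} (hn : 1 ≤ n)
    {f : Polynomial F} (hdeg : f.natDegree = n) (hcop : IsCoprime f (derivative f)) :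
    (sylv n f).det ≠ 0 := by
  intro h
  obtain ⟨v, hv0, hv⟩ := Matrix.exists_mulVec_eq_zero_iff.mpr h
  have hcombo : aPoly n v * f + bPoly n v * derivative f = 0 := by
    ext k
    by_cases hk : k < n - 1 + n
    · have h1 := sylv_mulVec n f v ⟨k, hk⟩
      rw [hv] at h1
      rw [← h1]
      simp
    · rw [combo_coeff_zero n hn f hdeg.le v k (by omega)]
      simp
  have hfb : f ∣ bPoly n v * derivative f :=
    ⟨-(aPoly n v), by linear_combination hcombo⟩
  have hfbdvd : f ∣ bPoly n v := hcop.dvd_of_dvd_mul_right hfb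
  have hfne : f ≠ 0 := fun hf => by simp [hf] at hdeg; omega
  have hb : bPoly n v = 0 := by
    by_contra hbne
    have h2 := Polynomial.natDegree_le_of_dvd hfbdvd hbne
    have h3 : (bPoly n v).natDegree ≤ n - 1 :=
      natDegree_le_iff_coeff_eq_zero.mpr fun N hN => bPoly_coeff_eq_zero n v N (by omega)
    omega
  have ha : aPoly n v = 0 := by
    have h2 : aPoly n v * f = 0 := by
      have := hcombo
      rw [hb, zero_mul, add_zero] at this
      exact this
    rcases mul_eq_zero.mp h2 with h3 | h3
    · exact h3
    · exact absurd h3 hfne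
  apply hv0
  funext i
  refine Fin.addCases (fun j => ?_) (fun j => ?_) i
  · have h4 := aPoly_coeff n v j
    rw [ha] at h4
    simpa using h4.symm
  · have h4 := bPoly_coeff n v j
    rw [hb] at h4
    simpa using h4.symm


lemma QJac_special (n : ℕ) (hn : 1 ≤ n) :
    QJac n (fun k => if (k : ℕ) = 0 ∨ (k : ℕ) = n then 1 else 0) = X ^ n - 1 := by
  unfold QJac
  set s₀ : Fin (2 * n) → ℂ := fun k => if (k : ℕ) = 0 ∨ (k : ℕ) = n then 1 else 0 with hs₀
  set M : Matrix (Fin (n + 1)) (Fin (n + 1)) (Polynomial ℂ) :=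
    Matrix.of (fun i j : Fin (n + 1) =>
      if h : (i : ℕ) < n then C (s₀ ⟨n + (i : ℕ) - (j : ℕ), by omega⟩) else X ^ (j : ℕ))
    with hM
  have hentry : ∀ i j : Fin (n + 1), (i : ℕ) < n →
      M i j = if (i : ℕ) = (j : ℕ) ∨ ((i : ℕ) = 0 ∧ (j : ℕ) = n) then 1 else 0 := by
    intro i j hi
    have hj := j.isLt
    rw [hM]
    simp only [Matrix.of_apply, dif_pos hi, hs₀]
    by_cases hc : (i : ℕ) = (j : ℕ) ∨ ((i : ℕ) = 0 ∧ (j : ℕ) = n)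
    · rw [if_pos hc, if_pos (by omega), Polynomial.C_1]
    · rw [if_neg hc, if_neg (by omega), Polynomial.C_0]
  have hlast : ∀ j : Fin (n + 1), M (Fin.last n) j = X ^ (j : ℕ) := by
    intro j
    rw [hM]
    simp only [Matrix.of_apply, Fin.val_last, dif_neg (lt_irrefl n)]
  have hne : (Fin.last n) ≠ (⟨0, by omega⟩ : Fin (n + 1)) := by
    intro hc
    have h5 := congrArg Fin.val hc
    simp only [Fin.val_last] at h5
    omega
  rw [← Matrix.det_updateCol_add_smul_self M hne (-1 : Polynomial ℂ)]
  set M' := M.updateCol (Fin.last n)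
    (fun k => M k (Fin.last n) + (-1 : Polynomial ℂ) • M k ⟨0, by omega⟩) with hM'
  have hcol : ∀ i : Fin (n + 1), M' i (Fin.last n)
      = if i = Fin.last n then X ^ n - 1 else 0 := by
    intro i
    rw [hM', Matrix.updateCol_self]
    by_cases hi : i = Fin.last n
    · rw [if_pos hi, hi, hlast, hlast]
      simp only [Fin.val_last, pow_zero, smul_eq_mul]
      ring
    · rw [if_neg hi]
      have hilt : (i : ℕ) < n := by
        have h5 := i.isLt
        have h6 : (i : ℕ) ≠ n := fun hc => hi (Fin.ext (by simpa using hc))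
        omega
      rw [hentry i (Fin.last n) hilt, hentry i ⟨0, by omega⟩ hilt]
      simp only [Fin.val_last, Fin.val_mk]
      by_cases hi0 : (i : ℕ) = 0
      · rw [if_pos (Or.inr ⟨hi0, trivial⟩), if_pos (Or.inl hi0)]
        rw [smul_eq_mul]; ring
      · rw [if_neg (by rintro (h | ⟨h1, h2⟩) <;> omega),
          if_neg (by rintro (h | ⟨h1, h2⟩) <;> omega)]
        rw [smul_eq_mul]; ring
  rw [Matrix.det_succ_column M' (Fin.last n)]
  rw [Finset.sum_eq_single (Fin.last n)]
  · rw [hcol, if_pos rfl]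
    have hsub : M'.submatrix (Fin.last n).succAbove (Fin.last n).succAbove = 1 := by
      refine Matrix.ext fun k j => ?_
      rw [Matrix.submatrix_apply, Fin.succAbove_last]
      rw [hM', Matrix.updateCol_ne (Fin.castSucc_lt_last j).ne]
      rw [hentry _ _ (by simpa using k.isLt)]
      simp only [Fin.coe_castSucc]
      by_cases hkj : k = j
      · rw [if_pos (Or.inl (by rw [hkj])), hkj, Matrix.one_apply_eq]
      · rw [if_neg, Matrix.one_apply_ne hkj]
        rintro (h | h)
        · exact hkj (Fin.ext h)
        · exact absurd h.2 (by have := j.isLt; omega)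
    rw [hsub, Matrix.det_one, mul_one, Fin.val_last]
    have : ((-1 : Polynomial ℂ)) ^ (n + n) = 1 := Even.neg_one_pow ⟨n, rfl⟩
    rw [this, one_mul]
  · intro i _ hi
    rw [hcol, if_neg hi, mul_zero, zero_mul]
  · intro h
    exact absurd (Finset.mem_univ _) h

lemma QJac_eq_Qgen (n : ℕ) (s : Fin (2 * n) → ℂ) : QJac n s = Qgen n s := rfl

/-- For every `n ≥ 1` there exists a nonzero polynomial `p` in the `2n`
complex variables `s_0, …, s_{2n−1}` such that whenever `p(s) ≠ 0`, the polynomial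
`Q_n^{(s)}` has degree exactly `n` and `n` pairwise distinct (simple) roots.  In particular
the set of `s` for which `Q_n^{(s)}` fails to have `n` simple roots is contained in a proper
algebraic subset of `ℂ^{2n}`. -/
theorem generic_simple_roots (n : ℕ) (hn : 1 ≤ n) :
    ∃ p : MvPolynomial (Fin (2 * n)) ℂ, p ≠ 0 ∧
      ∀ s : Fin (2 * n) → ℂ, MvPolynomial.eval s p ≠ 0 →
        (QJac n s).degree = (n : ℕ) ∧ (QJac n s).roots.toFinset.card = n := by
  classical
  set Fp : Polynomial (MvPolynomial (Fin (2 * n)) ℂ) :=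
    Qgen n (fun k => MvPolynomial.X k) with hFp
  have heval : ∀ s : Fin (2 * n) → ℂ,
      Polynomial.map (MvPolynomial.eval s) Fp = QJac n s := by
    intro s
    rw [hFp, Qgen_map, QJac_eq_Qgen]
    congr 1
    funext k
    rw [MvPolynomial.eval_X]
  have hevalcoeff : ∀ s : Fin (2 * n) → ℂ,
      MvPolynomial.eval s (Fp.coeff n) = (QJac n s).coeff n := by
    intro s
    rw [← heval s, Polynomial.coeff_map]
  have hevaldet : ∀ s : Fin (2 * n) → ℂ,
      MvPolynomial.eval s ((sylv n Fp).det) = (sylv n (QJac n s)).det := by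
    intro s
    rw [RingHom.map_det]
    congr 1
    rw [show ((MvPolynomial.eval s).mapMatrix (sylv n Fp)) = (sylv n Fp).map (MvPolynomial.eval s)
      from rfl, sylv_map, heval]
  refine ⟨Fp.coeff n * (sylv n Fp).det, ?_, ?_⟩
  · set s₀ : Fin (2 * n) → ℂ := fun k => if (k : ℕ) = 0 ∨ (k : ℕ) = n then 1 else 0 with hs₀
    have hQ : QJac n s₀ = X ^ n - 1 := QJac_special n hn
    intro h0
    have he : MvPolynomial.eval s₀ (Fp.coeff n * (sylv n Fp).det) = 0 := by
      rw [h0, map_zero]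
    rw [_root_.map_mul, hevalcoeff, hevaldet, hQ] at he
    have h1 : ((X : Polynomial ℂ) ^ n - 1).coeff n = 1 := by
      rw [coeff_sub, coeff_X_pow, if_pos rfl, coeff_one, if_neg (by omega)]
      ring
    have hdeg : ((X : Polynomial ℂ) ^ n - 1).natDegree = n := by
      have h2 : ((X : Polynomial ℂ) ^ n - C 1).natDegree = n :=
        natDegree_X_pow_sub_C
      simpa using h2
    have hsep : ((X : Polynomial ℂ) ^ n - 1).Separable := by
      have := Polynomial.separable_X_pow_sub_C (n := n) (1 : ℂ)
        (Nat.cast_ne_zero.mpr (by omega)) one_ne_zero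
      simpa using this
    have hdetne : (sylv n ((X : Polynomial ℂ) ^ n - 1)).det ≠ 0 :=
      sylv_det_ne_zero_of_coprime hn hdeg hsep
    rw [h1, one_mul] at he
    exact hdetne he
  · intro s hs
    rw [_root_.map_mul, hevalcoeff, hevaldet] at hs
    have hc : (QJac n s).coeff n ≠ 0 := fun h => hs (by rw [h, zero_mul])
    have hd : (sylv n (QJac n s)).det ≠ 0 := fun h => hs (by rw [h, mul_zero])
    have hle : (QJac n s).natDegree ≤ n := by
      rw [QJac_eq_Qgen]
      exact Qgen_natDegree_le n s
    have hnd : (QJac n s).natDegree = n :=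
      le_antisymm hle (le_natDegree_of_ne_zero hc)
    have hne0 : QJac n s ≠ 0 := fun h => hc (by rw [h, coeff_zero])
    constructor
    · rw [degree_eq_natDegree hne0, hnd]
    · have hcop : IsCoprime (QJac n s) (derivative (QJac n s)) :=
        coprime_of_sylv_det_ne_zero hn hle hd
      have hnodup : (QJac n s).roots.Nodup := nodup_roots hcop
      rw [Multiset.toFinset_card_of_nodup hnodup]
      have hsplit : Splits (QJac n s) := IsAlgClosed.splits _
      rw [splits_iff_card_roots.mp hsplit, hnd]
end

section
/- Then s_k = Σ_{j=0}^{n−1} ρ_j z_j^{k−1} for every k = 0, 1, …, 2n−1. That is, the overdetermined linear system V x = (s_0, …, s_{2n−1})^⊤, where V is the 2n×n matrix with entries V[k,j] = z_j^{k−1} (0 ≤ k ≤ 2n−1, 0 ≤ j ≤ n−1), is consistent, and (ρ_0, …, ρ_{n−1})^⊤ is its unique solution: any x ∈ ℂ^n with s_k = Σ_j x_j z_j^{k−1} for all k = 0, …, 2n−1 satisfies x_j = ρ_j for all j. -/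
open Polynomial Finset

lemma reflect_prod_X_sub_C {ι : Type*} [DecidableEq ι] (s : Finset ι) (v : ι → ℂ) :
    Polynomial.reflect s.card (∏ i ∈ s, (X - C (v i))) = ∏ i ∈ s, (1 - C (v i) * X) := by
  classical
  induction s using Finset.induction_on with
  | empty => simp
  | insert a s ha ih =>
    rw [Finset.prod_insert ha, Finset.prod_insert ha, Finset.card_insert_of_notMem ha,
      add_comm, reflect_mul _ _ (by simpa using natDegree_X_sub_C_le (v a))
        (by
          calc (∏ i ∈ s, (X - C (v i))).natDegree ≤ ∑ i ∈ s, (X - C (v i)).natDegree :=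
                natDegree_prod_le _ _
            _ ≤ s.card := by
                simpa using Finset.sum_le_card_nsmul s _ 1 fun i _ => natDegree_X_sub_C_le (v i)),
      ih]
    congr 1
    rw [reflect_sub, reflect_one_X]
    rw [show (C (v a) : ℂ[X]) = C (v a) * X ^ 0 by simp, reflect_C_mul_X_pow]
    simp

lemma coeff_zero_of_mul (q U : ℂ[X]) (hq : q.coeff 0 = 1) (m : ℕ)
    (h : ∀ k < m, (q * U).coeff k = 0) : ∀ k < m, U.coeff k = 0 := by
  intro k hk
  induction k using Nat.strong_induction_on with
  | _ k ih =>
    have hmul := h k hk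
    rw [coeff_mul] at hmul
    rw [Finset.sum_eq_single (0, k)] at hmul
    · rw [hq, one_mul] at hmul; exact hmul
    · rintro ⟨i, j⟩ hij hne
      rw [Finset.HasAntidiagonal.mem_antidiagonal] at hij
      have hj : j < k := by
        rcases Nat.eq_zero_or_pos i with hi | hi
        · subst hi; simp at hij; exact absurd (by simp [hij]) hne
        · omega
      rw [ih j hj (hj.trans hk), mul_zero]
    · intro hmem
      exact absurd (Finset.HasAntidiagonal.mem_antidiagonal.mpr (by simp)) hmem

lemma natDegree_prod_X_sub_C_le {ι : Type*} (s : Finset ι) (v : ι → ℂ) :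
    (∏ i ∈ s, (X - C (v i))).natDegree ≤ s.card := by
  calc (∏ i ∈ s, (X - C (v i))).natDegree ≤ ∑ i ∈ s, (X - C (v i)).natDegree :=
        natDegree_prod_le _ _
    _ ≤ s.card := by
        simpa using Finset.sum_le_card_nsmul s _ 1 fun i _ => natDegree_X_sub_C_le (v i)

lemma reflect_finset_sum {ι : Type*} (s : Finset ι) (f : ι → ℂ[X]) (N : ℕ) :
    Polynomial.reflect N (∑ i ∈ s, f i) = ∑ i ∈ s, Polynomial.reflect N (f i) := by
  classical
  induction s using Finset.induction_on with
  | empty => simp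
  | insert a s ha ih => rw [Finset.sum_insert ha, Finset.sum_insert ha, reflect_add, ih]

/-- Let `n ≥ 1`, `s_0, …, s_{2n−1} ∈ ℂ`, let `Q(w) = ∏_j (w − z_j)` be monic
of degree `n` with pairwise distinct nonzero roots, and let `P` be monic of degree `n−1`.
Assume `s_0 w P(w)/Q(w)` is the `[n−1/n]` Padé approximant at infinity of `Σ_k s_k w^{−k}`:
with the reversed polynomials `p(z) = z^{n−1}P(1/z)` and `q(z) = z^n Q(1/z)`, the
coefficients of `z^0, …, z^{2n−1}` in `s_0 p(z) − q(z)·Σ_{k<2n} s_k z^k` all vanish.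
Define `ρ_j = s_0 z_j P(z_j)/Q′(z_j)`.  Then `s_k = Σ_j ρ_j z_j^{k−1}` for every
`0 ≤ k ≤ 2n−1`, i.e. the overdetermined Vandermonde system `V x = s` is consistent with
solution `ρ`, and `ρ` is its unique solution. -/
theorem vandermonde_residues (n : ℕ) (hn : 1 ≤ n) (s : ℕ → ℂ)
    (z : Fin n → ℂ) (hz : Function.Injective z) (hz0 : ∀ j, z j ≠ 0)
    (P : Polynomial ℂ) (hP : P.Monic) (hPdeg : P.natDegree = n - 1)
    (hPade : ∀ k < 2 * n,
      (C (s 0) * Polynomial.reflect (n - 1) P -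
          Polynomial.reflect n (∏ j, (X - C (z j))) *
            ∑ k ∈ Finset.range (2 * n), C (s k) * X ^ k).coeff k = 0) :
    (∀ k < 2 * n,
      s k = ∑ j : Fin n,
        (s 0 * z j * eval (z j) P / eval (z j) (derivative (∏ i, (X - C (z i)))))
          * z j ^ ((k : ℤ) - 1)) ∧
    ∀ x : Fin n → ℂ,
      (∀ k < 2 * n, s k = ∑ j : Fin n, x j * z j ^ ((k : ℤ) - 1)) →
      ∀ j, x j = s 0 * z j * eval (z j) P / eval (z j) (derivative (∏ i, (X - C (z i)))) := by
  classical
  set Q : ℂ[X] := ∏ i, (X - C (z i)) with hQdef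
  set ρ : Fin n → ℂ := fun j => s 0 * z j * eval (z j) P / eval (z j) (derivative Q) with hρdef
  set Qj : Fin n → ℂ[X] := fun j => ∏ i ∈ Finset.univ.erase j, (X - C (z i)) with hQjdef
  -- derivative evaluation
  have hd : ∀ j, eval (z j) (derivative Q) = eval (z j) (Qj j) := by
    intro j
    have := Lagrange.eval_nodal_derivative_eval_node_eq (s := Finset.univ) (v := z)
      (Finset.mem_univ j)
    simpa [Lagrange.nodal, hQdef, hQjdef] using this
  have hdne : ∀ j, eval (z j) (derivative Q) ≠ 0 := by
    intro j
    rw [hd j, hQjdef]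
    simp only [eval_prod, eval_sub, eval_X, eval_C]
    rw [Finset.prod_ne_zero_iff]
    intro i hi
    exact sub_ne_zero.mpr fun h => (Finset.mem_erase.mp hi).1 (hz h.symm)
  have hρd : ∀ j, ρ j * eval (z j) (derivative Q) = s 0 * z j * eval (z j) P := by
    intro j; rw [hρdef]; exact div_mul_cancel₀ _ (hdne j)
  have hQmonic : Q.Monic := monic_prod_of_monic _ _ fun i _ => monic_X_sub_C (z i)
  have hQdeg : Q.natDegree = n := by
    rw [hQdef, natDegree_prod _ _ fun i _ => X_sub_C_ne_zero (z i)]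
    simp
  have hPne : P ≠ 0 := hP.ne_zero
  -- the partial fraction polynomial identity
  have hD : C (s 0) * (X * P) = C (s 0) * Q + ∑ j, C (ρ j) * Qj j := by
    have hD0 : C (s 0) * (X * P) - (C (s 0) * Q + ∑ j, C (ρ j) * Qj j) = 0 := by
      set D := C (s 0) * (X * P) - (C (s 0) * Q + ∑ j, C (ρ j) * Qj j) with hDdef
      have hevals : ∀ i, eval (z i) D = 0 := by
        intro i
        have hQz : eval (z i) Q = 0 := by
          rw [hQdef, eval_prod]
          exact Finset.prod_eq_zero (Finset.mem_univ i) (by simp)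
        have hsum : ∑ j, ρ j * eval (z i) (Qj j) = ρ i * eval (z i) (Qj i) := by
          refine Finset.sum_eq_single i (fun j _ hji => ?_) (by simp)
          have : eval (z i) (Qj j) = 0 := by
            rw [hQjdef, eval_prod]
            exact Finset.prod_eq_zero (Finset.mem_erase.mpr ⟨fun h => hji h.symm, Finset.mem_univ i⟩) (by simp)
          rw [this, mul_zero]
        have := hρd i
        rw [hd i] at this
        simp only [hDdef, eval_sub, eval_add, eval_mul, eval_C, eval_X, eval_finset_sum, hQz,
          mul_zero, zero_add]
        rw [hsum, this]
        ring
      have hDdegle : D.natDegree ≤ n := by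
        refine le_trans (natDegree_sub_le _ _) (max_le ?_ (le_trans (natDegree_add_le _ _)
          (max_le ?_ ?_)))
        · refine le_trans (natDegree_C_mul_le _ _) (le_trans (natDegree_mul_le) ?_)
          simp [hPdeg]; omega
        · exact le_trans (natDegree_C_mul_le _ _) hQdeg.le
        · refine le_trans (natDegree_sum_le_of_forall_le _ _ fun j _ => ?_) (by omega : n - 1 ≤ n)
          refine le_trans (natDegree_C_mul_le _ _) ?_
          refine le_trans (natDegree_prod_X_sub_C_le _ _) ?_
          simp [Finset.card_erase_of_mem]
      have hcoeffn : D.coeff n = 0 := by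
        have h1 : (X * P).coeff n = 1 := by
          rw [show n = (n - 1) + 1 by omega, coeff_X_mul]
          have := hP.coeff_natDegree
          rwa [hPdeg] at this
        have h2 : Q.coeff n = 1 := by
          have := hQmonic.coeff_natDegree
          rwa [hQdeg] at this
        have h3 : ∀ j, (Qj j).coeff n = 0 := fun j =>
          coeff_eq_zero_of_natDegree_lt (lt_of_le_of_lt (natDegree_prod_X_sub_C_le _ _)
            (by simp [Finset.card_erase_of_mem]; omega))
        simp only [hDdef, coeff_sub, coeff_add, coeff_C_mul, h1, h2, finset_sum_coeff]
        simp [h3]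
      rcases eq_or_ne D 0 with h | h
      · exact h
      · refine Polynomial.eq_zero_of_natDegree_lt_card_of_eval_eq_zero D hz hevals ?_
        rw [Fintype.card_fin]
        refine lt_of_le_of_ne hDdegle fun hEq => h (leadingCoeff_eq_zero.mp ?_)
        rw [leadingCoeff, hEq, hcoeffn]
    exact sub_eq_zero.mp hD0
  -- s 0 equals the sum of residues over z
  have hs0 : ∑ j, ρ j / z j = s 0 := by
    have he := congrArg (eval 0) hD
    simp only [eval_mul, eval_add, eval_C, eval_X, eval_finset_sum, zero_mul, mul_zero] at he
    have hc : eval 0 Q ≠ 0 := by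
      rw [hQdef]
      simp only [eval_prod, eval_sub, eval_X, eval_C, zero_sub]
      rw [Finset.prod_ne_zero_iff]
      exact fun i _ => neg_ne_zero.mpr (hz0 i)
    refine mul_right_cancel₀ hc ?_
    rw [Finset.sum_mul]
    have hterm : ∀ j, ρ j / z j * eval 0 Q = -(ρ j * eval 0 (Qj j)) := by
      intro j
      have hfac : Q = (X - C (z j)) * Qj j :=
        (Finset.mul_prod_erase _ _ (Finset.mem_univ j)).symm
      have : eval 0 Q = -z j * eval 0 (Qj j) := by
        rw [hfac, eval_mul, eval_sub, eval_X, eval_C, zero_sub]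
      rw [this, show ρ j / z j * (-z j * eval 0 (Qj j)) = -(ρ j / z j * z j * eval 0 (Qj j))
        by ring, div_mul_cancel₀ _ (hz0 j)]
    rw [Finset.sum_congr rfl fun j _ => hterm j]
    rw [Finset.sum_neg_distrib]
    linear_combination he
  -- reflected identity
  set p : ℂ[X] := Polynomial.reflect (n - 1) P with hpdef
  set q : ℂ[X] := ∏ j, (1 - C (z j) * X) with hqdef
  set qj : Fin n → ℂ[X] := fun j => ∏ i ∈ Finset.univ.erase j, (1 - C (z i) * X) with hqjdef
  have hq : Polynomial.reflect n Q = q := by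
    have := reflect_prod_X_sub_C (Finset.univ : Finset (Fin n)) z
    rw [Finset.card_univ, Fintype.card_fin] at this
    rw [hQdef, hqdef, this]
  have hqj : ∀ j, Polynomial.reflect n (Qj j) = X * qj j := by
    intro j
    have h1 : (Qj j).natDegree ≤ n - 1 := by
      refine le_trans (natDegree_prod_X_sub_C_le _ _) ?_
      simp [Finset.card_erase_of_mem]
    have h2 := (reflect_mul (1 : ℂ[X]) (Qj j) (F := 1) (G := n - 1) (by simp) h1).symm
    rw [one_mul, show 1 + (n - 1) = n by omega] at h2
    rw [← h2, reflect_one, pow_one]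
    congr 1
    have := reflect_prod_X_sub_C (Finset.univ.erase j) z
    rw [Finset.card_erase_of_mem (Finset.mem_univ j), Finset.card_univ, Fintype.card_fin] at this
    rw [hQjdef, hqjdef, this]
  have hrefl : C (s 0) * p = C (s 0) * q + ∑ j, C (ρ j) * (X * qj j) := by
    have hXP : Polynomial.reflect n (X * P) = p := by
      have h2 := reflect_mul (X : ℂ[X]) P (F := 1) (G := n - 1) natDegree_X_le hPdeg.le
      rw [show 1 + (n - 1) = n by omega, reflect_one_X, one_mul] at h2
      exact h2.trans hpdef.symm
    have := congrArg (Polynomial.reflect n) hD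
    rw [reflect_C_mul, reflect_add, reflect_C_mul, reflect_finset_sum, hXP, hq] at this
    rw [this]
    congr 1
    exact Finset.sum_congr rfl fun j _ => by rw [reflect_C_mul, hqj j]
  -- the true moment sequence
  set t : ℕ → ℂ := fun k => ∑ j, ρ j * z j ^ ((k : ℤ) - 1) with htdef
  set T : ℂ[X] := ∑ k ∈ Finset.range (2 * n), C (t k) * X ^ k with hTdef
  have hT : T = ∑ j, C (ρ j / z j) * ∑ k ∈ Finset.range (2 * n), (C (z j) * X) ^ k := by
    rw [hTdef, htdef]
    simp only [map_sum, Finset.sum_mul]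
    rw [Finset.sum_comm]
    refine Finset.sum_congr rfl fun j _ => ?_
    rw [Finset.mul_sum]
    refine Finset.sum_congr rfl fun k _ => ?_
    have hsc : ρ j * z j ^ ((k : ℤ) - 1) = ρ j / z j * z j ^ k := by
      rw [zpow_sub₀ (hz0 j), zpow_one, zpow_natCast]
      ring
    rw [hsc, mul_pow, C_mul, C_pow]
    ring
  have hqT : q * T = ∑ j, C (ρ j / z j) * qj j * (1 - (C (z j) * X) ^ (2 * n)) := by
    rw [hT, Finset.mul_sum]
    refine Finset.sum_congr rfl fun j _ => ?_
    have hfac : q = (1 - C (z j) * X) * qj j :=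
      (Finset.mul_prod_erase _ _ (Finset.mem_univ j)).symm
    have hg := mul_neg_geom_sum (C (z j) * X) (2 * n)
    rw [hfac]
    linear_combination (C (ρ j / z j) * qj j) * hg
  have hEt : ∀ k < 2 * n, (C (s 0) * p - q * T).coeff k = 0 := by
    have hE : C (s 0) * p - q * T
        = (∑ j, C (ρ j / z j * z j ^ (2 * n)) * qj j) * X ^ (2 * n) := by
      have hs0' : C (s 0) = ∑ j, C (ρ j / z j) := by rw [← hs0, map_sum]
      rw [hrefl, hqT, hs0', Finset.sum_mul, ← Finset.sum_add_distrib,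
        ← Finset.sum_sub_distrib, Finset.sum_mul]
      refine Finset.sum_congr rfl fun j _ => ?_
      have hfac : q = (1 - C (z j) * X) * qj j :=
        (Finset.mul_prod_erase _ _ (Finset.mem_univ j)).symm
      have hCρ : C (ρ j) = C (ρ j / z j) * C (z j) := by
        rw [← C_mul, div_mul_cancel₀ _ (hz0 j)]
      have hC2 : C (ρ j / z j * z j ^ (2 * n)) = C (ρ j / z j) * C (z j) ^ (2 * n) := by
        rw [C_mul, C_pow]
      rw [hfac, hCρ, hC2]
      ring
    intro k hk
    rw [hE, coeff_mul_X_pow', if_neg (by omega)]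
  have hq0 : q.coeff 0 = 1 := by
    rw [coeff_zero_eq_eval_zero, hqdef]
    simp [eval_prod]
  set S : ℂ[X] := ∑ k ∈ Finset.range (2 * n), C (s k) * X ^ k with hSdef
  have hPade' : ∀ k < 2 * n, (C (s 0) * p - q * S).coeff k = 0 := by
    intro k hk
    have := hPade k hk
    rwa [hq] at this
  have hST : ∀ k < 2 * n, (S - T).coeff k = 0 := by
    apply coeff_zero_of_mul q _ hq0
    intro k hk
    have h1 := hPade' k hk
    have h2 := hEt k hk
    have hid : q * (S - T) = (C (s 0) * p - q * T) - (C (s 0) * p - q * S) := by ring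
    rw [hid, coeff_sub, h2, h1, sub_zero]
  have hcoeff : ∀ (a : ℕ → ℂ), ∀ k < 2 * n,
      (∑ k' ∈ Finset.range (2 * n), C (a k') * X ^ k').coeff k = a k := by
    intro a k hk
    rw [finset_sum_coeff]
    simp only [coeff_C_mul, coeff_X_pow, mul_ite, mul_one, mul_zero]
    rw [Finset.sum_ite_eq (Finset.range (2 * n)) k a, if_pos (Finset.mem_range.mpr hk)]
  have hmain : ∀ k < 2 * n, s k = t k := by
    intro k hk
    have hSk : S.coeff k = s k := by rw [hSdef]; exact hcoeff s k hk
    have hTk : T.coeff k = t k := by rw [hTdef]; exact hcoeff t k hk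
    have := hST k hk
    rw [coeff_sub, hSk, hTk] at this
    exact sub_eq_zero.mp this
  constructor
  · exact hmain
  · intro x hx j
    have hzero : (fun i => x i - ρ i) = 0 := by
      apply Matrix.eq_zero_of_forall_pow_sum_mul_pow_eq_zero hz
      intro i
      have hk : (i : ℕ) + 1 < 2 * n := by have := i.2; omega
      have h1 := hx ((i : ℕ) + 1) hk
      have h2 := hmain ((i : ℕ) + 1) hk
      simp only [htdef] at h2
      have hzp : ∀ l : Fin n, z l ^ (((((i : ℕ) + 1 : ℕ)) : ℤ) - 1) = z l ^ (i : ℕ) := by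
        intro l
        rw [show ((((i : ℕ) + 1 : ℕ)) : ℤ) - 1 = ((i : ℕ) : ℤ) by push_cast; ring, zpow_natCast]
      have hsplit : ∑ l, (x l - ρ l) * z l ^ (i : ℕ)
          = (∑ l, x l * z l ^ (((((i : ℕ) + 1 : ℕ)) : ℤ) - 1))
            - ∑ l, ρ l * z l ^ (((((i : ℕ) + 1 : ℕ)) : ℤ) - 1) := by
        rw [← Finset.sum_sub_distrib]
        refine Finset.sum_congr rfl fun l _ => ?_
        rw [hzp l]
        ring
      rw [hsplit, ← h1, ← h2, sub_self]
    have := congrFun hzero j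
    simpa [sub_eq_zero] using this
end
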